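/- In the ring of formal power series ℚ⟦X⟧, one has ( Σ_{n≥0} (nⁿ / n!)·Xⁿ ) · ( 1 − X · Σ_{n≥0} ((n+1)^(n−1) / n!)·Xⁿ ) = 1, where (n+1)^(n−1) uses truncated natural-number subtraction in the exponent (so the n = 0 coefficient is 1^0 = 1, consistent with the intended value 1^(−1) = 1). Equivalently, writing h(x) = Σ nⁿ xⁿ/n! and g(x) = Σ (n+1)^(n−1) xⁿ/n!, one has h·(1 − x·g) = 1. -/

import Mathlib

open Polynomial Finset


lemma deg_comp_sub (p : ℚ[X]) {n : ℕ} (hp : p.degree < n + 1) :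
    (p - p.comp (X + C 1)).degree < n := by
  by_cases h0 : p.natDegree = 0
  · have : p = C (p.coeff 0) := eq_C_of_natDegree_eq_zero h0
    rw [this]
    simp only [C_comp, sub_self, degree_zero]
    exact WithBot.bot_lt_coe n
  · have hpne : p ≠ 0 := fun hh => h0 (by simp [hh])
    have hX1 : (X + C (1:ℚ)).natDegree ≠ 0 := by
      rw [natDegree_X_add_C]; exact one_ne_zero
    have hlc : (p.comp (X + C 1)).leadingCoeff = p.leadingCoeff := by
      rw [leadingCoeff_comp hX1, leadingCoeff_X_add_C, one_pow, mul_one]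
    have hcne : p.comp (X + C 1) ≠ 0 := by
      intro hh
      apply hpne
      rw [← leadingCoeff_eq_zero] at hh ⊢
      rw [← hlc, hh]
    have hd : (p.comp (X + C 1)).degree = p.degree := by
      rw [degree_eq_natDegree hpne, degree_eq_natDegree hcne, natDegree_comp,
        natDegree_X_add_C, mul_one]
    have h1 : (p - p.comp (X + C 1)).degree < p.degree :=
      degree_sub_lt hd.symm hpne hlc.symm
    have h2 : p.degree ≤ n := by
      rw [degree_eq_natDegree hpne] at hp ⊢
      exact_mod_cast Nat.lt_succ_iff.mp (by exact_mod_cast hp)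
    exact lt_of_lt_of_le h1 h2

lemma fd_aux (n : ℕ) : ∀ (p : ℚ[X]), p.degree < n →
    ∀ x : ℚ, ∑ k ∈ range (n + 1), (-1 : ℚ) ^ k * (n.choose k : ℚ) * p.eval (x + k) = 0 := by
  induction n with
  | zero =>
    intro p hp x
    have : p = 0 := by
      rw [← degree_eq_bot]
      exact Nat.WithBot.lt_zero_iff.mp (by exact_mod_cast hp)
    simp [this]
  | succ n ih =>
    intro p hp x
    set f : ℕ → ℚ := fun k => (-1 : ℚ) ^ k * (n.choose k : ℚ) * p.eval (x + k) with hf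
    set g : ℕ → ℚ := fun k => (-1 : ℚ) ^ k * (n.choose k : ℚ) * p.eval (x + k + 1) with hg
    have hA : ∀ k ∈ range (n + 1), (-1 : ℚ) ^ (k + 1) * ((n + 1).choose (k + 1) : ℚ)
        * p.eval (x + ↑(k + 1)) = ((f k - g k) - f k) + f (k + 1) := by
      intro k hk
      have hc : (((n + 1).choose (k + 1) : ℕ) : ℚ) = (n.choose k : ℚ) + (n.choose (k + 1) : ℚ) := by
        exact_mod_cast congrArg (Nat.cast (R := ℚ)) (Nat.choose_succ_succ n k)
      simp only [hf, hg, hc]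
      push_cast
      ring
    rw [Finset.sum_range_succ', Finset.sum_congr rfl hA]
    have hB : (-1 : ℚ) ^ 0 * ((n + 1).choose 0 : ℚ) * p.eval (x + ((0 : ℕ) : ℚ)) = f 0 := by
      simp [hf]
    have hshift : ∑ k ∈ range (n + 1), f (k + 1) + f 0 = ∑ k ∈ range (n + 1), f k := by
      rw [← Finset.sum_range_succ' f (n + 1), Finset.sum_range_succ]
      have : f (n + 1) = 0 := by simp [hf, Nat.choose_succ_self]
      rw [this, add_zero]
    have hq0 : ∑ k ∈ range (n + 1), (f k - g k) = 0 := by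
      have hq := ih (p - p.comp (X + C 1)) (deg_comp_sub p (by exact_mod_cast hp)) x
      rw [← hq]
      apply Finset.sum_congr rfl
      intro k hk
      simp only [hf, hg, eval_sub, eval_comp, eval_add, eval_X, eval_C]
      ring
    rw [Finset.sum_add_distrib, Finset.sum_sub_distrib, hq0]
    linarith [hshift, hB]

lemma choose_mul_sub (n k : ℕ) (hk : k ≤ n) :
    (n + 1 - k) * (n + 1).choose k = (n + 1) * n.choose k := by
  have h1 : (n + 1).choose (n - k + 1) = (n + 1).choose k := by
    have : n + 1 - k = n - k + 1 := by omega
    rw [← this, Nat.choose_symm (by omega)]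
  have h2 := Nat.add_one_mul_choose_eq n (n - k)
  rw [Nat.choose_symm hk] at h2
  have h3 : n + 1 - k = n - k + 1 := by omega
  rw [h3, ← h1, h2]
  ring

lemma poly_eq_of_deriv {p q : ℚ[X]} (h : derivative p = derivative q) (y : ℚ)
    (h2 : p.eval y = q.eval y) : p = q := by
  have h3 : derivative (p - q) = 0 := by rw [derivative_sub, h, sub_self]
  have h4 := eq_C_of_derivative_eq_zero h3
  have h5 : (p - q).eval y = 0 := by rw [eval_sub, h2, sub_self]
  rw [h4, eval_C] at h5
  rw [h5, map_zero] at h4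
  exact sub_eq_zero.mp h4

lemma abel_poly (x : ℚ) : ∀ n : ℕ,
    (X + C (n : ℚ)) ^ n +
      ∑ k ∈ range n, C ((n.choose (k + 1) : ℚ) * x * (x + k + 1) ^ k) *
        (X + C ((n : ℚ) - (k + 1))) ^ (n - (k + 1)) = (X + C (x + n)) ^ n := by
  intro n
  induction n with
  | zero => simp
  | succ n IH =>
    apply poly_eq_of_deriv (h := ?_) (-(x + n + 1)) ?_
    · rw [derivative_add, derivative_sum]
      simp only [derivative_C_mul, derivative_X_add_C_pow]
      apply Polynomial.funext
      intro y
      have IHe := congrArg (eval (y + 1)) IH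
      simp only [eval_add, eval_pow, eval_mul, eval_X, eval_C, eval_finset_sum] at IHe ⊢
      rw [Finset.sum_range_succ]
      norm_num [Nat.sub_self]
      have hterm : ∀ k ∈ range n,
          (((n + 1).choose (k + 1) : ℕ) : ℚ) * x * (x + ↑k + 1) ^ k *
              (((n + 1 - (k + 1) : ℕ) : ℚ) * (y + ((n : ℚ) - ↑k)) ^ (n + 1 - (k + 1) - 1))
            = ((n : ℚ) + 1) * ((n.choose (k + 1) : ℚ) * x * (x + ↑k + 1) ^ k *
              (y + 1 + ((n : ℚ) - (↑k + 1))) ^ (n - (k + 1))) := by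
        intro k hk
        have hk' := mem_range.mp hk
        have he1 : n + 1 - (k + 1) - 1 = n - (k + 1) := by omega
        have he2 : n + 1 - (k + 1) = n - k := by omega
        rw [he1, he2]
        have hch : ((n - k : ℕ) : ℚ) * ((n + 1).choose (k + 1) : ℚ)
            = ((n : ℚ) + 1) * (n.choose (k + 1) : ℚ) := by
          have h2 := choose_mul_sub n (k + 1) (by omega)
          rw [he2] at h2
          exact_mod_cast h2
        have hb : (y + ((n : ℚ) - ↑k)) = (y + 1 + ((n : ℚ) - (↑k + 1))) := by ring
        rw [hb]
        linear_combination (x * (x + (k : ℚ) + 1) ^ k *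
          (y + 1 + ((n : ℚ) - (↑k + 1))) ^ (n - (k + 1))) * hch
      rw [Finset.sum_congr rfl hterm, ← Finset.mul_sum]
      linear_combination ((n : ℚ) + 1) * IHe
    · simp only [eval_add, eval_pow, eval_mul, eval_X, eval_C, eval_finset_sum]
      push_cast
      have hfd := fd_aux (n + 1) (X ^ n) (by
        rw [degree_X_pow]; exact_mod_cast Nat.lt_succ_self n) x
      simp only [eval_pow, eval_X] at hfd
      rw [Finset.sum_range_succ'] at hfd
      simp only [Nat.cast_zero, add_zero, pow_zero, Nat.choose_zero_right, Nat.cast_one,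
        one_mul, mul_one] at hfd
      have h2 : ∑ k ∈ range (n + 1),
          (-1 : ℚ) ^ (k + 1) * ((n + 1).choose (k + 1) : ℚ) * (x + ↑(k + 1)) ^ n = -x ^ n := by
        linarith [hfd]
      have hterm2 : ∀ k ∈ range (n + 1),
          (((n + 1).choose (k + 1) : ℕ) : ℚ) * x * (x + ↑k + 1) ^ k *
              (-(x + ↑n + 1) + ((n : ℚ) + 1 - (↑k + 1))) ^ (n - k)
            = ((-1 : ℚ) ^ (n + 1) * x) *
              ((-1 : ℚ) ^ (k + 1) * ((n + 1).choose (k + 1) : ℚ) * (x + ↑(k + 1)) ^ n) := by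
        intro k hk
        have hk' := Nat.lt_succ_iff.mp (mem_range.mp hk)
        have hb : (-(x + ↑n + 1) + ((n : ℚ) + 1 - (↑k + 1))) = -(x + ↑k + 1) := by ring
        rw [hb, neg_pow]
        have hp1 : (x + (k : ℚ) + 1) ^ k * (x + (k : ℚ) + 1) ^ (n - k) = (x + (k : ℚ) + 1) ^ n := by
          rw [← pow_add]; congr 1; omega
        have hs : (-1 : ℚ) ^ (n - k) = (-1) ^ (n + 1) * (-1) ^ (k + 1) := by
          have he : (n + 1) + (k + 1) = (n - k) + 2 * (k + 1) := by omega
          calc (-1 : ℚ) ^ (n - k) = (-1) ^ (n - k) * (((-1 : ℚ) ^ 2) ^ (k + 1)) := by norm_num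
            _ = (-1) ^ ((n - k) + 2 * (k + 1)) := by rw [← pow_mul, ← pow_add]
            _ = (-1) ^ ((n + 1) + (k + 1)) := by rw [← he]
            _ = (-1) ^ (n + 1) * (-1) ^ (k + 1) := pow_add _ _ _
        have hc : ((k + 1 : ℕ) : ℚ) = (k : ℚ) + 1 := by push_cast; ring
        rw [hs, hc]
        linear_combination ((-1 : ℚ) ^ (n + 1) * (-1 : ℚ) ^ (k + 1) *
          (((n + 1).choose (k + 1) : ℕ) : ℚ) * x) * hp1
      rw [Finset.sum_congr rfl hterm2, ← Finset.mul_sum, h2]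
      ring

lemma key' (n : ℕ) :
    ∑ k ∈ range n, (n.choose (k + 1) : ℚ) * (((n - (k + 1) : ℕ) : ℚ)) ^ (n - (k + 1)) *
      ((k : ℚ) + 1) ^ k = (n : ℚ) ^ (n - 1) * n := by
  have P : ∀ x : ℚ, ∑ k ∈ range n, (n.choose (k + 1) : ℚ) *
      (((n - (k + 1) : ℕ) : ℚ)) ^ (n - (k + 1)) * (x * (x + ((k : ℚ) + 1)) ^ k)
      = (x + n) ^ n - (n : ℚ) ^ n := by
    intro x
    have h := congrArg (eval 0) (abel_poly x n)
    simp only [eval_add, eval_pow, eval_mul, eval_X, eval_C, eval_finset_sum, zero_add] at h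
    have hterm : ∀ k ∈ range n,
        (n.choose (k + 1) : ℚ) * (((n - (k + 1) : ℕ) : ℚ)) ^ (n - (k + 1)) *
          (x * (x + ((k : ℚ) + 1)) ^ k)
        = (n.choose (k + 1) : ℚ) * x * (x + (k : ℚ) + 1) ^ k *
            ((n : ℚ) - ((k : ℚ) + 1)) ^ (n - (k + 1)) := by
      intro k hk
      have hk' := mem_range.mp hk
      have hcast : (((n - (k + 1) : ℕ) : ℚ)) = (n : ℚ) - ((k : ℚ) + 1) := by
        push_cast [Nat.cast_sub (show k + 1 ≤ n by omega)]
        ring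
      rw [hcast]; ring
    rw [Finset.sum_congr rfl hterm]
    linarith [h]
  -- promote to polynomial identity in x
  have hLR : (∑ k ∈ range n, C ((n.choose (k + 1) : ℚ) *
        (((n - (k + 1) : ℕ) : ℚ)) ^ (n - (k + 1))) * (X * (X + C ((k : ℚ) + 1)) ^ k))
      = (X + C (n : ℚ)) ^ n - C ((n : ℚ) ^ n) := by
    apply Polynomial.funext
    intro x
    simp only [eval_finset_sum, eval_mul, eval_pow, eval_add, eval_X, eval_C, eval_sub]
    exact P x
  have hc := congrArg (fun p : ℚ[X] => p.coeff 1) hLR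
  simp only [finset_sum_coeff, coeff_C_mul, coeff_sub] at hc
  have ht2 : ∀ k ∈ range n,
      ((n.choose (k + 1) : ℚ) * (((n - (k + 1) : ℕ) : ℚ)) ^ (n - (k + 1))) *
        (X * (X + C ((k : ℚ) + 1)) ^ k).coeff 1
      = (n.choose (k + 1) : ℚ) * (((n - (k + 1) : ℕ) : ℚ)) ^ (n - (k + 1)) *
        ((k : ℚ) + 1) ^ k := by
    intro k hk
    rw [show (1 : ℕ) = 0 + 1 from rfl, coeff_X_mul, coeff_X_add_C_pow]
    simp
  rw [Finset.sum_congr rfl ht2, coeff_X_add_C_pow, coeff_C] at hc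
  simpa [Nat.choose_one_right] using hc

lemma hmul (j : ℕ) : (((j + 1) ^ (j - 1) : ℕ) : ℚ) * ((j + 1).factorial : ℚ)
    = (((j + 1) ^ j : ℕ) : ℚ) * (j.factorial : ℚ) := by
  cases j with
  | zero => norm_num
  | succ t =>
    rw [show t + 1 + 1 = t + 2 from rfl, show (t + 2).factorial = (t + 2) * (t + 1).factorial
      from rfl]
    push_cast
    rw [pow_succ]
    ring

lemma conv (m : ℕ) : ∑ i ∈ range (m + 1),
    ((i ^ i : ℕ) : ℚ) / (i.factorial : ℚ) *
      ((((m - i) + 1) ^ ((m - i) - 1) : ℕ) : ℚ) / ((m - i).factorial : ℚ)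
    = (((m + 1) ^ (m + 1) : ℕ) : ℚ) / ((m + 1).factorial : ℚ) := by
  rw [← Finset.sum_range_reflect]
  have hterm : ∀ j ∈ range (m + 1),
      (((m + 1 - 1 - j) ^ (m + 1 - 1 - j) : ℕ) : ℚ) / ((m + 1 - 1 - j).factorial : ℚ) *
        ((((m - (m + 1 - 1 - j)) + 1) ^ ((m - (m + 1 - 1 - j)) - 1) : ℕ) : ℚ) /
          ((m - (m + 1 - 1 - j)).factorial : ℚ)
      = (1 / (((m + 1).factorial : ℚ))) * (((m + 1).choose (j + 1) : ℚ) *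
          ((((m + 1) - (j + 1) : ℕ) : ℚ)) ^ ((m + 1) - (j + 1)) * ((j : ℚ) + 1) ^ j) := by
    intro j hj
    have hj' := Nat.lt_succ_iff.mp (mem_range.mp hj)
    have e1 : m + 1 - 1 - j = m - j := by omega
    have e2 : m - (m - j) = j := by omega
    have e3 : m + 1 - (j + 1) = m - j := by omega
    rw [e1, e2, e3]
    have hch : ((m + 1).choose (j + 1) : ℚ)
        = ((m + 1).factorial : ℚ) / (((j + 1).factorial : ℚ) * ((m - j).factorial : ℚ)) := by
      rw [Nat.cast_choose ℚ (show j + 1 ≤ m + 1 by omega), e3]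
    rw [hch]
    have f1 : ((j + 1).factorial : ℚ) ≠ 0 := Nat.cast_ne_zero.mpr (Nat.factorial_ne_zero _)
    have f2 : ((m - j).factorial : ℚ) ≠ 0 := Nat.cast_ne_zero.mpr (Nat.factorial_ne_zero _)
    have f3 : ((m + 1).factorial : ℚ) ≠ 0 := Nat.cast_ne_zero.mpr (Nat.factorial_ne_zero _)
    have hmulj := hmul j
    push_cast at hmulj ⊢
    field_simp
    linear_combination (((m - j : ℕ) : ℚ)) ^ (m - j) * hmulj
  rw [Finset.sum_congr rfl hterm, ← Finset.mul_sum, key' (m + 1)]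
  have f3 : ((m + 1).factorial : ℚ) ≠ 0 := Nat.cast_ne_zero.mpr (Nat.factorial_ne_zero _)
  push_cast
  field_simp
  ring

/-- Functional relation `h * (1 - x * g) = 1` between the exponential generating
function `h` of `n ^ n` (counting complete τ-exceptional sequences over `Λ_n^n`)
and the exponential generating function `g` of `(n+1)^(n-1)` (counting complete
exceptional sequences over the type `A_{n+1}` path algebra). -/
theorem egf_H_functional_relation :
    (PowerSeries.mk fun n => ((n ^ n : ℕ) : ℚ) / (Nat.factorial n : ℚ)) *
      (1 - PowerSeries.X *
        PowerSeries.mk (fun n => (((n + 1) ^ (n - 1) : ℕ) : ℚ) / (Nat.factorial n : ℚ))) =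
      1 := by
  set A := PowerSeries.mk fun n => ((n ^ n : ℕ) : ℚ) / (Nat.factorial n : ℚ) with hA
  set B := PowerSeries.mk (fun n => (((n + 1) ^ (n - 1) : ℕ) : ℚ) / (Nat.factorial n : ℚ)) with hB
  apply PowerSeries.ext
  intro n
  rw [PowerSeries.coeff_one, mul_sub, mul_one, map_sub,
    show A * (PowerSeries.X * B) = PowerSeries.X * (A * B) by ring]
  cases n with
  | zero =>
    simp [hA, PowerSeries.coeff_zero_eq_constantCoeff, map_mul]
  | succ m =>
    rw [PowerSeries.coeff_succ_X_mul, PowerSeries.coeff_mul,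
      Finset.Nat.sum_antidiagonal_eq_sum_range_succ_mk]
    simp only [hA, hB, PowerSeries.coeff_mk, Nat.succ_ne_zero, if_false]
    rw [sub_eq_zero]
    rw [← conv m]
    apply Finset.sum_congr rfl
    intro i hi
    ring
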